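/- arXiv:2012.10483 — 3 statements merged into one kernel-verified Lean document; each statement's English description precedes it below -/
import Mathlib

section
/- Let a ≠ 0, b > 0, r₀ > 0, and let r : ℝ → ℝ be a function with r(0) = r₀ such that on an interval I containing 0 one has r(t) > 0 and r'(t) = a − b / r(t) for all t ∈ I. Then for all t ∈ I: ((a·r(t) − b)/b) · exp((a·r(t) − b)/b) = ((a·r₀ − b)/b) · exp((a·r₀ − b)/b) · exp(a²·t / b). -/
lemma const_of_deriv_zero_on (g : ℝ → ℝ) (I : Set ℝ) (hI : I.OrdConnected)
    (h0 : (0:ℝ) ∈ I) (hg : ∀ t ∈ I, HasDerivAt g 0 t) :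
    ∀ t ∈ I, g t = g 0 := by
  intro t ht
  rcases le_total 0 t with h | h
  · have hsub : Set.Icc (0:ℝ) t ⊆ I := hI.out h0 ht
    exact constant_of_has_deriv_right_zero
      (fun x hx => ((hg x (hsub hx)).continuousAt).continuousWithinAt)
      (fun x hx => ((hg x (hsub (Set.Ico_subset_Icc_self hx))).hasDerivWithinAt))
      t (Set.mem_Icc.2 ⟨h, le_refl t⟩)
  · have hsub : Set.Icc t (0:ℝ) ⊆ I := hI.out ht h0
    exact (constant_of_has_deriv_right_zero
      (fun x hx => ((hg x (hsub hx)).continuousAt).continuousWithinAt)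
      (fun x hx => ((hg x (hsub (Set.Ico_subset_Icc_self hx))).hasDerivWithinAt))
      0 (Set.mem_Icc.2 ⟨h, le_refl 0⟩)).symm ▸ rfl

/-- Implicit exponential form of the closed-form solution: if `r` solves
`r' = a - b/r`, `r 0 = r₀`, with `r t > 0` on an interval `I` containing `0`,
then `((a r(t) − b)/b) exp((a r(t) − b)/b)
  = ((a r₀ − b)/b) exp((a r₀ − b)/b) exp(a² t / b)` on `I`. -/
theorem sphere_advection_mean_curvature_implicit_exp
    (a b r₀ : ℝ) (ha : a ≠ 0) (hb : 0 < b) (hr₀ : 0 < r₀)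
    (r : ℝ → ℝ) (hr0 : r 0 = r₀) (I : Set ℝ) (hI : I.OrdConnected) (h0 : (0 : ℝ) ∈ I)
    (hpos : ∀ t ∈ I, 0 < r t)
    (hode : ∀ t ∈ I, HasDerivAt r (a - b / r t) t) :
    ∀ t ∈ I,
      ((a * r t - b) / b) * Real.exp ((a * r t - b) / b) =
        ((a * r₀ - b) / b) * Real.exp ((a * r₀ - b) / b) * Real.exp (a ^ 2 * t / b) := by
  set g : ℝ → ℝ := fun t =>
    ((a * r t - b) / b) * Real.exp ((a * r t - b) / b) * Real.exp (-(a ^ 2 * t / b)) with hg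
  have hbne : b ≠ 0 := ne_of_gt hb
  have key : ∀ t ∈ I, HasDerivAt g 0 t := by
    intro t ht
    have hrpos := hpos t ht
    have hu : HasDerivAt (fun t => (a * r t - b) / b) (a * (a - b / r t) / b) t := by
      exact (((hode t ht).const_mul a).sub_const b).div_const b
    have hf : HasDerivAt (fun t => ((a * r t - b) / b) * Real.exp ((a * r t - b) / b))
        ((a * (a - b / r t) / b) * Real.exp ((a * r t - b) / b)
          + ((a * r t - b) / b) * (Real.exp ((a * r t - b) / b) * (a * (a - b / r t) / b))) t :=
      hu.mul ((Real.hasDerivAt_exp _).comp t hu)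
    have he : HasDerivAt (fun t : ℝ => Real.exp (-(a ^ 2 * t / b)))
        (Real.exp (-(a ^ 2 * t / b)) * (-(a ^ 2 / b))) t := by
      have : HasDerivAt (fun t : ℝ => -(a ^ 2 * t / b)) (-(a ^ 2 / b)) t := by
        exact (((hasDerivAt_id' t).const_mul (a ^ 2)).div_const b).neg.congr_deriv (by ring)
      exact (Real.hasDerivAt_exp _).comp t this
    have := hf.mul he
    refine (this : HasDerivAt g _ t).congr_deriv ?_
    have hE : Real.exp (-(a ^ 2 * t / b)) ≠ 0 := Real.exp_ne_zero _
    set E1 := Real.exp ((a * r t - b) / b)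
    set E2 := Real.exp (-(a ^ 2 * t / b))
    have hrne : r t ≠ 0 := hrpos.ne'
    field_simp
    ring_nf
  intro t ht
  have hconst := const_of_deriv_zero_on g I hI h0 key t ht
  simp only [hg, hr0, mul_zero, zero_div, neg_zero, Real.exp_zero, mul_one] at hconst
  have : ((a * r t - b) / b) * Real.exp ((a * r t - b) / b)
      * (Real.exp (-(a ^ 2 * t / b)) * Real.exp (a ^ 2 * t / b))
      = ((a * r₀ - b) / b) * Real.exp ((a * r₀ - b) / b) * Real.exp (a ^ 2 * t / b) := by
    rw [← mul_assoc, hconst]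
  simpa [← Real.exp_add] using this
end

section
/- Let a > 0, b > 0, 0 < r₀ < b/a, and let r be a solution of r' = a − b/r with r(0) = r₀ and r(t) > 0 on [0, T). Then T ≤ r₀² / (b − a·r₀); i.e., a sphere starting below the meta-stable radius cannot remain positive for all time and must vanish in finite time. -/
/-- A sphere starting below the meta-stable radius vanishes in finite time:
if `r` solves `r' = a - b/r` with `r 0 = r₀`, `0 < r₀ < b/a`, and `r t > 0`
on `[0, T)`, then `T ≤ r₀² / (b − a r₀)`. -/
theorem sphere_advection_mean_curvature_finite_vanishing
    (a b r₀ T : ℝ) (ha : 0 < a) (hb : 0 < b)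
    (r : ℝ → ℝ) (hr0 : r 0 = r₀) (hr₀ : 0 < r₀) (hr₀' : r₀ < b / a)
    (hpos : ∀ t ∈ Set.Ico (0 : ℝ) T, 0 < r t)
    (hode : ∀ t ∈ Set.Ico (0 : ℝ) T, HasDerivAt r (a - b / r t) t) :
    T ≤ r₀ ^ 2 / (b - a * r₀) := by
  have hba : 0 < b - a * r₀ := by
    have h := (lt_div_iff₀ ha).mp hr₀'
    nlinarith
  set c : ℝ := (b - a * r₀) / r₀ with hc
  have hcpos : 0 < c := div_pos hba hr₀
  rcases le_or_gt T 0 with hT | hT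
  · exact hT.trans (le_of_lt (div_pos (pow_pos hr₀ 2) hba))
  -- Step 1+2: for every t ∈ [0, T), r t ≤ r₀ - c * t
  have key : ∀ t ∈ Set.Ico (0 : ℝ) T, r t ≤ r₀ - c * t := by
    intro t ht
    obtain ⟨ht0, htT⟩ := ht
    have hsub : Set.Icc (0:ℝ) t ⊆ Set.Ico 0 T := fun x hx => ⟨hx.1, hx.2.trans_lt htT⟩
    have hcont : ContinuousOn r (Set.Icc 0 t) := fun x hx =>
      ((hode x (hsub hx)).continuousAt).continuousWithinAt
    have hder : ∀ x ∈ Set.Ico (0:ℝ) t, HasDerivWithinAt r (a - b / r x) (Set.Ici x) x :=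
      fun x hx => ((hode x (hsub ⟨hx.1, hx.2.le⟩)).hasDerivWithinAt)
    -- Step 1: r ≤ r₀ on [0, t]
    have step1 : ∀ ⦃x⦄, x ∈ Set.Icc (0:ℝ) t → r x ≤ r₀ := by
      apply image_le_of_deriv_right_lt_deriv_boundary (B := fun _ => r₀) (B' := fun _ => 0)
        hcont hder (le_of_eq hr0) (fun x => hasDerivAt_const x r₀)
      intro x hx hrx
      rw [hrx]
      have : a < b / r₀ := (lt_div_iff₀ hr₀).mpr (by linarith)
      linarith
    -- Step 2: r x ≤ r₀ - c x on [0, t]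
    have step2 : ∀ ⦃x⦄, x ∈ Set.Icc (0:ℝ) t → r x ≤ r₀ - c * x := by
      apply image_le_of_deriv_right_le_deriv_boundary (B := fun x => r₀ - c * x)
        (B' := fun _ => -c) hcont hder (by simp [hr0])
      · exact (continuous_const.sub (continuous_const.mul continuous_id)).continuousOn
      · intro x _
        exact ((hasDerivAt_const x r₀).sub ((hasDerivAt_id x).const_mul c)).hasDerivWithinAt
          |>.congr_deriv (by ring)
      · intro x hx
        have hrpos := hpos x (hsub ⟨hx.1, hx.2.le⟩)
        have hrle : r x ≤ r₀ := step1 ⟨hx.1, hx.2.le⟩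
        have : b / r₀ ≤ b / r x := div_le_div_of_nonneg_left hb.le hrpos hrle
        have hceq : c = b / r₀ - a := by rw [hc, sub_div, mul_div_assoc, div_self hr₀.ne']; ring
        linarith
    exact step2 ⟨ht0, le_rfl⟩
  -- Conclude
  by_contra hcon
  push_neg at hcon
  have hrc : r₀ ^ 2 / (b - a * r₀) = r₀ / c := by
    rw [hc, div_div_eq_mul_div]; ring
  set s := r₀ ^ 2 / (b - a * r₀) with hs
  have hs0 : 0 ≤ s := le_of_lt (div_pos (pow_pos hr₀ 2) hba)
  have hsmem : s ∈ Set.Ico (0:ℝ) T := ⟨hs0, hcon⟩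
  have h1 := key s hsmem
  have h2 := hpos s hsmem
  have hcs : c * s = r₀ := by
    rw [hs, hc]
    field_simp
  linarith
end

section
/- Let a ≠ 0, b > 0, 0 < r₀ with b − a·r₀ > 0, and let r : [0, T) → ℝ be a solution of r' = a − b/r with r(0) = r₀, r(t) > 0 on [0, T), and r(t) → 0 as t → T from the left. Then the vanishing time is exactly T = (b/a²)·log(b / (b − a·r₀)) − r₀/a. -/
open Filter Topology
open Set MeasureTheory intervalIntegral in

/-- Vanishing time of advection and mean curvature flow: if `a ≠ 0`, `b > 0`,
`0 < r₀` with `b - a r₀ > 0`, and `r` solves `r' = a - b/r` on `[0, T)` with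
`r 0 = r₀`, `r t > 0` on `[0, T)`, and `r t → 0` as `t → T⁻`, then
`T = (b/a²) log(b / (b − a r₀)) − r₀/a`. -/
theorem sphere_advection_mean_curvature_vanishing_time
    (a b r₀ T : ℝ) (ha : a ≠ 0) (hb : 0 < b) (hr₀ : 0 < r₀)
    (hcond : 0 < b - a * r₀) (hT : 0 < T)
    (r : ℝ → ℝ) (hr0 : r 0 = r₀)
    (hpos : ∀ t ∈ Set.Ico (0 : ℝ) T, 0 < r t)
    (hode : ∀ t ∈ Set.Ico (0 : ℝ) T, HasDerivAt r (a - b / r t) t)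
    (hvanish : Tendsto r (𝓝[<] T) (𝓝 0)) :
    T = (b / a ^ 2) * Real.log (b / (b - a * r₀)) - r₀ / a := by
  -- continuity of a / r at points of [0, T)
  have hφc : ∀ s ∈ Set.Ico (0:ℝ) T, ContinuousAt (fun u => a / r u) s := by
    intro s hs
    exact (continuousAt_const.div (hode s hs).continuousAt (hpos s hs).ne')
  -- Step 1: b - a * r t > 0 on [0, T)
  have key : ∀ t ∈ Set.Ico (0:ℝ) T, 0 < b - a * r t := by
    intro t ht
    obtain ⟨ht0, htT⟩ := ht
    set A : ℝ → ℝ := fun s => ∫ u in (0:ℝ)..s, a / r u with hAdef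
    have hsub : Set.Icc (0:ℝ) t ⊆ Set.Ico 0 T := fun s hs => ⟨hs.1, lt_of_le_of_lt hs.2 htT⟩
    have hφcon : ContinuousOn (fun u => a / r u) (Set.Icc 0 t) :=
      fun s hs => (hφc s (hsub hs)).continuousWithinAt
    have hint : ∀ s ∈ Set.Icc (0:ℝ) t, IntervalIntegrable (fun u => a / r u) volume 0 s := by
      intro s hs
      apply ContinuousOn.intervalIntegrable
      rw [Set.uIcc_of_le hs.1]
      exact hφcon.mono (Set.Icc_subset_Icc le_rfl hs.2)
    have hAderiv : ∀ s ∈ Set.Icc (0:ℝ) t,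
        HasDerivWithinAt A (a / r s) (Set.Ici s) s := by
      intro s hs
      have hs' : s ∈ Set.Ico (0:ℝ) T := hsub hs
      refine intervalIntegral.integral_hasDerivWithinAt_right (hint s hs)
        ⟨Set.Ico s T, ?_, ?_⟩ (hφc s hs').continuousWithinAt
      · refine mem_nhdsWithin.mpr ⟨Set.Iio T, isOpen_Iio, hs'.2, ?_⟩
        rintro x ⟨h1, h2⟩; exact ⟨le_of_lt h2, h1⟩
      · refine ContinuousOn.aestronglyMeasurable ?_ measurableSet_Ico
        intro u hu
        exact (hφc u ⟨le_trans hs'.1 hu.1, hu.2⟩).continuousWithinAt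
    have hconA : ContinuousOn A (Set.Icc 0 t) := by
      have := intervalIntegral.continuousOn_primitive_interval (a := (0:ℝ)) (b := t)
        (μ := volume) (f := fun u => a / r u) ?_
      · rwa [Set.uIcc_of_le ht0] at this
      · rw [Set.uIcc_of_le ht0]
        exact hφcon.integrableOn_Icc
    set f : ℝ → ℝ := fun s => (b - a * r s) * Real.exp (-A s) with hfdef
    have hcontf : ContinuousOn f (Set.Icc 0 t) := by
      apply ContinuousOn.mul
      · exact continuousOn_const.sub (continuousOn_const.mul
          (fun s hs => (hode s (hsub hs)).continuousAt.continuousWithinAt))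
      · exact Real.continuous_exp.comp_continuousOn hconA.neg
    have hderivf : ∀ s ∈ Set.Ico (0:ℝ) t, HasDerivWithinAt f 0 (Set.Ici s) s := by
      intro s hs
      have hs' : s ∈ Set.Ico (0:ℝ) T := ⟨hs.1, hs.2.trans htT⟩
      have hr : 0 < r s := hpos s hs'
      have h1 : HasDerivWithinAt (fun u => b - a * r u) (-(a * (a - b / r s)))
          (Set.Ici s) s := by
        simpa using (((hode s hs').const_mul a).const_sub b).hasDerivWithinAt
      have h2 : HasDerivWithinAt A (a / r s) (Set.Ici s) s :=
        hAderiv s ⟨hs.1, hs.2.le⟩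
      have h3 : HasDerivWithinAt (fun u => Real.exp (-A u))
          (Real.exp (-A s) * -(a / r s)) (Set.Ici s) s := h2.neg.exp
      have := h1.mul h3
      convert this using 1
      · rfl
      · rfl
      · rfl
      · field_simp
        ring
    have hconst := constant_of_has_deriv_right_zero hcontf hderivf t (Set.right_mem_Icc.mpr ht0)
    have hf0 : f 0 = b - a * r₀ := by
      simp [hfdef, hAdef, hr0]
    rw [hf0] at hconst
    have hexp : 0 < Real.exp (-A t) := Real.exp_pos _
    have h5 : (b - a * r t) * Real.exp (-A t) = b - a * r₀ := hconst
    nlinarith [h5, hexp, hcond]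
  -- Step 2: the conserved quantity g
  set g : ℝ → ℝ := fun s =>
    (b / a ^ 2) * (Real.log b - Real.log (b - a * r s)) - r s / a + s with hgdef
  have hgderiv : ∀ s ∈ Set.Ico (0:ℝ) T, HasDerivAt g 0 s := by
    intro s hs
    have hr := hpos s hs
    have hbr := key s hs
    have hrd := hode s hs
    have hlog : HasDerivAt (fun u => Real.log (b - a * r u))
        (-(a * (a - b / r s)) / (b - a * r s)) s := by
      have h1 : HasDerivAt (fun u => b - a * r u) (-(a * (a - b / r s))) s := by
        simpa using ((hrd.const_mul a).const_sub b)
      exact h1.log hbr.ne'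
    have := (((hasDerivAt_const s (Real.log b)).sub hlog).const_mul (b / a ^ 2)).sub
      (hrd.div_const a) |>.add (hasDerivAt_id s)
    convert this using 1
    · rfl
    · rfl
    · rfl
    · field_simp
      ring
  have hgconst : ∀ t ∈ Set.Ico (0:ℝ) T, g t = g 0 := by
    intro t ht
    have hsub : Set.Icc (0:ℝ) t ⊆ Set.Ico 0 T := fun s hs => ⟨hs.1, lt_of_le_of_lt hs.2 ht.2⟩
    exact constant_of_has_deriv_right_zero
      (fun s hs => (hgderiv s (hsub hs)).continuousAt.continuousWithinAt)
      (fun s hs => (hgderiv s (hsub ⟨hs.1, hs.2.le⟩)).hasDerivWithinAt)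
      t (Set.right_mem_Icc.mpr ht.1)
  -- Step 3: limit as t → T⁻
  have hbrlim : Tendsto (fun s => b - a * r s) (𝓝[<] T) (𝓝 b) := by
    simpa using (hvanish.const_mul a).const_sub b
  have hloglim : Tendsto (fun s => Real.log (b - a * r s)) (𝓝[<] T) (𝓝 (Real.log b)) :=
    (Real.continuousAt_log hb.ne').tendsto.comp hbrlim
  have hid : Tendsto (fun s : ℝ => s) (𝓝[<] T) (𝓝 T) :=
    tendsto_id.mono_left nhdsWithin_le_nhds
  have hglim : Tendsto g (𝓝[<] T) (𝓝 ((b / a ^ 2) * (Real.log b - Real.log b) - 0 / a + T)) := by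
    exact ((tendsto_const_nhds.sub hloglim).const_mul _).sub (hvanish.div_const a) |>.add hid
  have hev : g =ᶠ[𝓝[<] T] fun _ => g 0 := by
    have hmem : Set.Ioo (0:ℝ) T ∈ 𝓝[<] T :=
      Ioo_mem_nhdsLT_of_mem ⟨hT, le_rfl⟩
    filter_upwards [hmem] with s hs
    exact hgconst s ⟨hs.1.le, hs.2⟩
  have hglim' : Tendsto (fun _ : ℝ => g 0) (𝓝[<] T) (𝓝 ((b / a ^ 2) * (Real.log b - Real.log b) - 0 / a + T)) :=
    hglim.congr' hev
  have huniq : g 0 = (b / a ^ 2) * (Real.log b - Real.log b) - 0 / a + T :=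
    tendsto_nhds_unique tendsto_const_nhds hglim'
  have hg0 : g 0 = (b / a ^ 2) * (Real.log b - Real.log (b - a * r₀)) - r₀ / a := by
    simp [hgdef, hr0]
  rw [hg0] at huniq
  rw [Real.log_div hb.ne' hcond.ne']
  simp at huniq
  linarith
end
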